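/- Let S be a set and π an equivalence relation on S having at most one non-singleton class. Then for any equivalence relations ρ, σ on S with ρ ≤ π, one has π ∧ (σ ∨ ρ) ≤ (π ∧ σ) ∨ ρ. -/

import Mathlib

theorem stmt_3 {S : Type*} (π : Setoid S)
    (h : ∀ a b c d : S, π.r a b → a ≠ b → π.r c d → c ≠ d → π.r a c)
    (ρ σ : Setoid S) (hρ : ρ ≤ π) :
    π ⊓ (σ ⊔ ρ) ≤ (π ⊓ σ) ⊔ ρ := by
  classical
  set T : Setoid S := (π ⊓ σ) ⊔ ρ with hTdef
  have hTπ : T ≤ π := sup_le inf_le_left hρ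
  -- Big x : x lies in a non-singleton π-class
  set Big : S → Prop := fun x => ∃ y, π.r x y ∧ x ≠ y with hBig
  have keyBig : ∀ x y, Big x → Big y → π.r x y := by
    rintro x y ⟨a, ha, hxa⟩ ⟨b, hb, hyb⟩
    exact h x a y b ha hxa hb hyb
  have keySmall : ∀ x y, ¬ Big x → π.r x y → x = y := by
    intro x y hx hxy
    by_contra hne
    exact hx ⟨y, hxy, hne⟩
  have hσT : ∀ {x y}, π.r x y → σ x y → T x y := by
    intro x y h1 h2
    exact le_sup_left (a := π ⊓ σ) (b := ρ) (Setoid.inf_iff_and.2 ⟨h1, h2⟩)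
  have hρT : ∀ {x y}, ρ x y → T x y := fun hx => le_sup_right (a := π ⊓ σ) hx
  -- the auxiliary relation
  set R : S → S → Prop := fun u v =>
    ∃ p q, (u = p ∨ σ u p) ∧ T p q ∧ (q = v ∨ σ q v) with hRdef
  have hRrefl : ∀ x, R x x := fun x => ⟨x, x, Or.inl rfl, T.refl' x, Or.inl rfl⟩
  have hRsymm : ∀ {x y}, R x y → R y x := by
    rintro x y ⟨p, q, h1, h2, h3⟩
    refine ⟨q, p, ?_, T.symm' h2, ?_⟩
    · rcases h3 with h3 | h3
      · exact Or.inl h3.symm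
      · exact Or.inr (σ.symm' h3)
    · rcases h1 with h1 | h1
      · exact Or.inl h1.symm
      · exact Or.inr (σ.symm' h1)
  have hRtrans : ∀ {u v w}, R u v → R v w → R u w := by
    rintro u v w ⟨p, q, h1, h2, h3⟩ ⟨p', q', h1', h2', h3'⟩
    have hqp' : q = p' ∨ σ q p' := by
      rcases h3 with h3 | h3 <;> rcases h1' with h1' | h1'
      · exact Or.inl (h3.trans h1')
      · exact Or.inr (h3 ▸ h1')
      · exact Or.inr (h1' ▸ h3)
      · exact Or.inr (σ.trans' h3 h1')
    rcases hqp' with hqp' | hqp'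
    · exact ⟨p, q', h1, T.trans' h2 (hqp' ▸ h2'), h3'⟩
    · by_cases hq : Big q
      · by_cases hp' : Big p'
        · have hπqp' : π.r q p' := keyBig _ _ hq hp'
          exact ⟨p, q', h1, T.trans' (T.trans' h2 (hσT hπqp' hqp')) h2', h3'⟩
        · -- p' singleton, hence p' = q'
          have hpe : p' = q' := keySmall _ _ hp' (hTπ h2')
          refine ⟨p, q, h1, h2, Or.inr ?_⟩
          rcases h3' with h3' | h3'
          · exact (hpe.trans h3') ▸ hqp'
          · exact σ.trans' (hpe ▸ hqp') h3'
      · -- q singleton, hence q = p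
        have hqp : q = p := keySmall _ _ hq (π.symm' (hTπ h2))
        refine ⟨p', q', Or.inr ?_, h2', h3'⟩
        rcases h1 with h1 | h1
        · exact (h1.trans hqp.symm) ▸ hqp'
        · exact σ.trans' h1 (hqp ▸ hqp')
  -- R as a setoid, so that σ ⊔ ρ ≤ R
  have hsup : ∀ {x y}, (σ ⊔ ρ) x y → R x y := by
    intro x y hxy
    have : σ ⊔ ρ ≤ ⟨R, hRrefl, @hRsymm, @hRtrans⟩ := by
      refine sup_le ?_ ?_ <;> intro a b hab
      · exact ⟨a, a, Or.inl rfl, T.refl' a, Or.inr hab⟩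
      · exact ⟨a, b, Or.inl rfl, hρT hab, Or.inl rfl⟩
    exact this hxy
  intro x y hxy
  have hπxy : π.r x y := (Setoid.inf_iff_and.1 hxy).1
  have hRxy : R x y := hsup (Setoid.inf_iff_and.1 hxy).2
  by_cases hxye : x = y
  · exact hxye ▸ T.refl' x
  have hBx : Big x := ⟨y, hπxy, hxye⟩
  have hBy : Big y := ⟨x, π.symm' hπxy, fun e => hxye e.symm⟩
  obtain ⟨p, q, h1, h2, h3⟩ := hRxy
  by_cases hp : Big p
  · have hTxp : T x p := by
      rcases h1 with h1 | h1
      · exact h1 ▸ T.refl' x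
      · exact hσT (keyBig _ _ hBx hp) h1
    have hTxq : T x q := T.trans' hTxp h2
    rcases h3 with h3 | h3
    · exact h3 ▸ hTxq
    · by_cases hq : Big q
      · exact T.trans' hTxq (hσT (keyBig _ _ hq hBy) h3)
      · have hqp : q = p := keySmall _ _ hq (π.symm' (hTπ h2))
        exact absurd (hqp ▸ hp) hq
  · -- p singleton, hence p = q, chain degenerates to a σ-link from x to y
    have hpq : p = q := keySmall _ _ hp (hTπ h2)
    have hσxy : σ x y := by
      rcases h1 with h1 | h1 <;> rcases h3 with h3 | h3
      · exact absurd ((h1.trans hpq).trans h3) hxye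
      · exact (h1.trans hpq) ▸ h3
      · exact (hpq.trans h3) ▸ h1
      · exact σ.trans' (hpq ▸ h1) h3
    exact hσT hπxy hσxy
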